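/- Let ρ : ℝ → ℝ be C² and F : ℝ → ℝ continuous, and suppose ρ(t) ρ''(t) + ρ'(t)² = 2 F(t) ρ(t) ρ'(t) for all t ∈ ℝ. Then there exist constants c, c' ∈ ℝ such that ρ(t)² = c · ∫₀ᵗ exp(2 ∫₀ˢ F(u) du) ds + c' for all t ∈ ℝ. -/

import Mathlib

open Real

/-- if `ρ` is C², `F` is continuous and `ρ ρ'' + ρ'² = 2 F ρ ρ'` on ℝ,
then `ρ(t)² = c ∫₀ᵗ exp(2 ∫₀ˢ F(u) du) ds + c'` for some constants `c, c'`. -/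
theorem mixedKilling_ode_solution (ρ F : ℝ → ℝ) (hρ : ContDiff ℝ 2 ρ)
    (hF : Continuous F)
    (h : ∀ t, ρ t * deriv (deriv ρ) t + (deriv ρ t) ^ 2 = 2 * F t * (ρ t * deriv ρ t)) :
    ∃ c c' : ℝ, ∀ t,
      (ρ t) ^ 2 = c * (∫ s in (0 : ℝ)..t, exp (2 * ∫ u in (0 : ℝ)..s, F u)) + c' := by
  have hρ1 : Differentiable ℝ ρ := hρ.differentiable (by norm_num)
  have hρ' : ContDiff ℝ 1 (deriv ρ) :=
    (contDiff_succ_iff_deriv.mp (show ContDiff ℝ (1 + 1) ρ by exact_mod_cast hρ)).2.2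
  have hρ'd : Differentiable ℝ (deriv ρ) := hρ'.differentiable one_ne_zero
  set G : ℝ → ℝ := fun t => 2 * ∫ u in (0:ℝ)..t, F u with hGdef
  have hGd : ∀ t, HasDerivAt G (2 * F t) t := by
    intro t
    have : HasDerivAt (fun t => ∫ u in (0:ℝ)..t, F u) (F t) t :=
      intervalIntegral.integral_hasDerivAt_right (hF.intervalIntegrable _ _)
        (hF.stronglyMeasurableAtFilter _ _) hF.continuousAt
    simpa using this.const_mul 2
  have hEc : Continuous (fun t => exp (G t)) := by
    have hGc : Continuous G := continuous_iff_continuousAt.mpr fun t => (hGd t).continuousAt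
    exact Real.continuous_exp.comp hGc
  -- g t = 2 ρ ρ' exp(-G) has derivative 0
  set g : ℝ → ℝ := fun t => 2 * ρ t * deriv ρ t * exp (-(G t)) with hgdef
  have hgd : ∀ t, HasDerivAt g 0 t := by
    intro t
    have h1 : HasDerivAt (fun t => 2 * ρ t * deriv ρ t)
        (2 * deriv ρ t * deriv ρ t + 2 * ρ t * deriv (deriv ρ) t) t := by
      have := (((hρ1 t).hasDerivAt.const_mul 2).mul (hρ'd t).hasDerivAt)
      simpa [mul_comm, mul_assoc, mul_left_comm, Pi.mul_def] using this
    have h2 := ((hGd t).neg).exp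
    have := h1.mul h2
    simp only [Pi.mul_def, Pi.neg_apply] at this
    refine this.congr_deriv ?_
    have hode := h t
    linear_combination (2 * Real.exp (-(G t))) * hode
  have hgc : ∀ t, g t = g 0 :=
    fun t => is_const_of_deriv_eq_zero (fun x => (hgd x).differentiableAt)
      (fun x => (hgd x).deriv) t 0
  set c : ℝ := g 0 with hc
  have key : ∀ t, 2 * ρ t * deriv ρ t = c * exp (G t) := by
    intro t
    have h1 : 2 * ρ t * deriv ρ t * exp (-(G t)) = c := hgc t
    have h2 : exp (-(G t)) * exp (G t) = 1 := by
      rw [← Real.exp_add]; simp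
    calc 2 * ρ t * deriv ρ t
        = 2 * ρ t * deriv ρ t * (exp (-(G t)) * exp (G t)) := by rw [h2, mul_one]
      _ = (2 * ρ t * deriv ρ t * exp (-(G t))) * exp (G t) := by ring
      _ = c * exp (G t) := by rw [h1]
  -- H t = ρ² - c ∫₀ᵗ exp(G) has derivative 0
  set H : ℝ → ℝ := fun t => ρ t ^ 2 - c * ∫ s in (0:ℝ)..t, exp (G s) with hHdef
  have hHd : ∀ t, HasDerivAt H 0 t := by
    intro t
    have h1 : HasDerivAt (fun t => ρ t ^ 2) (2 * ρ t * deriv ρ t) t := by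
      have := ((hρ1 t).hasDerivAt.mul (hρ1 t).hasDerivAt)
      simp only [Pi.mul_def] at this
      have h2 : HasDerivAt (fun t => ρ t * ρ t) (2 * ρ t * deriv ρ t) t := by
        refine this.congr_deriv ?_; ring
      simpa [sq] using h2
    have h2 : HasDerivAt (fun t => c * ∫ s in (0:ℝ)..t, exp (G s)) (c * exp (G t)) t := by
      have : HasDerivAt (fun t => ∫ s in (0:ℝ)..t, exp (G s)) (exp (G t)) t :=
        intervalIntegral.integral_hasDerivAt_right (hEc.intervalIntegrable _ _)
          (hEc.stronglyMeasurableAtFilter _ _) hEc.continuousAt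
      exact this.const_mul c
    have := h1.sub h2
    simpa [key t, Pi.sub_def] using this
  refine ⟨c, ρ 0 ^ 2, fun t => ?_⟩
  have hHc : H t = H 0 :=
    is_const_of_deriv_eq_zero (fun x => (hHd x).differentiableAt)
      (fun x => (hHd x).deriv) t 0
  have h0 : H 0 = ρ 0 ^ 2 := by simp [hHdef]
  have : ρ t ^ 2 - c * ∫ s in (0:ℝ)..t, exp (G s) = ρ 0 ^ 2 := by
    rw [← h0]; exact hHc
  linarith [this]
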